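/- Let ℓ ≥ 3 be an integer, G a graph, and (H₁,…,H_t) a construction sequence of ℓ-cycles in G. Then for every 1 ≤ i ≤ t−1, setting e_i = |E(H_{i+1}) \ E(H_i)| and v_i = |V(H_{i+1}) \ V(H_i)|, we have e_i ≥ v_i + 1 and v_i ≤ ℓ − 2. -/

import Mathlib

open SimpleGraph

/-- `C` is an `ℓ`-cycle of `G`, given as a subgraph of `G`. -/
def IsCycleSubgraph {V : Type*} (G : SimpleGraph V) (ℓ : ℕ) (C : G.Subgraph) : Prop :=
  Nonempty (C.coe ≃g SimpleGraph.cycleGraph ℓ)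

/-- `(H 1, …, H t)` is a construction sequence of `ℓ`-cycles in `G`: `H 1` is an
`ℓ`-cycle of `G` and each `H (i+1)` is obtained from `H i` by adding an `ℓ`-cycle `C`
of `G` with `C ⊄ H i` and `E(C) ∩ E(H i) ≠ ∅`. -/
def IsConstructionSeq {V : Type*} (G : SimpleGraph V) (ℓ t : ℕ)
    (H : ℕ → G.Subgraph) : Prop :=
  1 ≤ t ∧ IsCycleSubgraph G ℓ (H 1) ∧
    ∀ i, 1 ≤ i → i < t → ∃ C : G.Subgraph, IsCycleSubgraph G ℓ C ∧
      ¬ C ≤ H i ∧ (C.edgeSet ∩ (H i).edgeSet).Nonempty ∧ H (i + 1) = H i ⊔ C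

open Fin.CommRing in
/-- Closure lemma on `Fin (n+1)`: a nonempty set closed under subtracting 1 is everything. -/
lemma cyc_closure {n : ℕ} {B : Set (Fin (n + 1))} {b : Fin (n + 1)} (hb : b ∈ B)
    (hcl : ∀ x ∈ B, x - 1 ∈ B) : ∀ x, x ∈ B := by
  have key : ∀ m : ℕ, b - (m : Fin (n + 1)) ∈ B := by
    intro m
    induction m with
    | zero => simpa using hb
    | succ m ih =>
        have h := hcl _ ih
        have heq : b - (m : Fin (n + 1)) - 1 = b - ((m + 1 : ℕ) : Fin (n + 1)) := by
          push_cast; ring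
        rwa [heq] at h
  intro x
  have h := key (b - x).val
  rwa [Fin.cast_val_eq_self, sub_sub_cancel] at h

/-- Combinatorial counting lemma on the cycle `Fin (k+3)`. -/
lemma fin_count {k : ℕ} (A B : Set (Fin (k + 3)))
    (hAB : ∀ j ∈ A, j ∈ B ∧ j - 1 ∈ B) (j₀ : Fin (k + 3))
    (hj₀B : j₀ ∉ B) (hj₀A : j₀ ∉ A) (hj₁A : j₀ + 1 ∉ A) (hBne : B.Nonempty) :
    A.ncard + 1 ≤ B.ncard ∧ A.ncard ≤ k + 1 := by
  obtain ⟨b, hb⟩ := hBne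
  have hex : ∃ x ∈ B, x - 1 ∉ B := by
    by_contra h
    push_neg at h
    exact hj₀B (cyc_closure hb h j₀)
  obtain ⟨k₀, hk₀B, hk₀⟩ := hex
  have hk₀A : k₀ ∉ A := fun h => hk₀ (hAB k₀ h).2
  have hsub : A ⊆ B := fun j hj => (hAB j hj).1
  constructor
  · have hlt : A.ncard < B.ncard :=
      Set.ncard_lt_ncard ⟨hsub, fun h => hk₀A (h hk₀B)⟩ (Set.toFinite B)
    omega
  · have hsub2 : A ⊆ Set.univ \ {j₀, j₀ + 1} := by
      intro j hj
      refine ⟨Set.mem_univ _, ?_⟩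
      rintro (rfl | rfl)
      · exact hj₀A hj
      · exact hj₁A hj
    have hne : j₀ ≠ j₀ + 1 := fun h => one_ne_zero (left_eq_add.mp h)
    have hcard : (Set.univ \ ({j₀, j₀ + 1} : Set (Fin (k + 3)))).ncard = k + 1 := by
      rw [Set.ncard_diff (Set.subset_univ _), Set.ncard_univ, Set.ncard_pair hne]
      simp [Nat.card_eq_fintype_card]
    calc A.ncard ≤ _ := Set.ncard_le_ncard hsub2 (Set.toFinite _)
      _ = k + 1 := hcard

/-- In a construction sequence of `ℓ`-cycles, for every `1 ≤ i ≤ t-1`, setting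
`e i = |E(H (i+1)) \\ E(H i)|` and `v i = |V(H (i+1)) \\ V(H i)|`, we have
`e i ≥ v i + 1` and `v i ≤ ℓ - 2`. -/
theorem construction_step_counts {V : Type*} [Fintype V]
    (ℓ : ℕ) (hℓ : 3 ≤ ℓ) (G : SimpleGraph V)
    (t : ℕ) (H : ℕ → G.Subgraph) (hH : IsConstructionSeq G ℓ t H) :
    ∀ i, 1 ≤ i → i < t →
      ((H (i + 1)).verts \ (H i).verts).ncard + 1 ≤
          ((H (i + 1)).edgeSet \ (H i).edgeSet).ncard ∧
        ((H (i + 1)).verts \ (H i).verts).ncard ≤ ℓ - 2 := by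
  obtain ⟨-, -, hstep⟩ := hH
  intro i hi1 hit
  obtain ⟨C, ⟨φ⟩, hCle, hint, hsup⟩ := hstep i hi1 hit
  obtain ⟨k, rfl⟩ : ∃ k, ℓ = k + 3 := ⟨ℓ - 3, by omega⟩
  set ψ : Fin (k + 3) → V := fun j => ((φ.symm j : C.verts) : V) with hψdef
  have hψinj : Function.Injective ψ := fun a b h =>
    φ.symm.injective (Subtype.ext h)
  have hψmem : ∀ j, ψ j ∈ C.verts := fun j => (φ.symm j).2
  have hp : ∀ z : C.verts, ψ (φ z) = (z : V) := by
    intro z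
    simp only [hψdef, RelIso.symm_apply_apply]
  -- each j gives an edge of C
  have hAdj' : ∀ j : Fin (k + 3), C.Adj (ψ j) (ψ (j + 1)) := by
    intro j
    have hcyc : (cycleGraph (k + 3)).Adj j (j + 1) :=
      cycleGraph_adj (n := k + 1) |>.mpr (Or.inr (add_sub_cancel_left j 1))
    have h2 : C.coe.Adj (φ.symm j) (φ.symm (j + 1)) := φ.symm.map_rel_iff.mpr hcyc
    exact h2
  -- each edge of C is of this form
  have hCadj : ∀ x y, C.Adj x y → ∃ j : Fin (k + 3), s(x, y) = s(ψ j, ψ (j + 1)) := by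
    intro x y hxy
    have hx : x ∈ C.verts := hxy.fst_mem
    have hy : y ∈ C.verts := hxy.snd_mem
    have hcoe : C.coe.Adj ⟨x, hx⟩ ⟨y, hy⟩ := hxy
    have happ : (cycleGraph (k + 3)).Adj (φ ⟨x, hx⟩) (φ ⟨y, hy⟩) := φ.map_rel_iff.mpr hcoe
    have happ' := (cycleGraph_adj (n := k + 1)).mp happ
    rcases happ' with h | h
    · -- φ x - φ y = 1, take j = φ y
      refine ⟨φ ⟨y, hy⟩, ?_⟩
      have heq : φ ⟨x, hx⟩ = φ ⟨y, hy⟩ + 1 := (sub_eq_iff_eq_add.mp h).trans (add_comm _ _)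
      rw [hp ⟨y, hy⟩, ← heq, hp ⟨x, hx⟩, Sym2.eq_swap]
    · refine ⟨φ ⟨x, hx⟩, ?_⟩
      have heq : φ ⟨y, hy⟩ = φ ⟨x, hx⟩ + 1 := (sub_eq_iff_eq_add.mp h).trans (add_comm _ _)
      rw [hp ⟨x, hx⟩, ← heq, hp ⟨y, hy⟩]
  classical
  set A : Set (Fin (k + 3)) := {j | ψ j ∉ (H i).verts} with hAdef
  set B : Set (Fin (k + 3)) := {j | s(ψ j, ψ (j + 1)) ∉ (H i).edgeSet} with hBdef
  -- B nonempty
  have hBne : B.Nonempty := by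
    by_contra h
    rw [Set.not_nonempty_iff_eq_empty] at h
    have hall : ∀ j : Fin (k + 3), s(ψ j, ψ (j + 1)) ∈ (H i).edgeSet := by
      intro j
      by_contra hj
      have hmem : j ∈ B := hj
      simp [h] at hmem
    apply hCle
    constructor
    · intro x hx
      have hm := (SimpleGraph.Subgraph.mem_edgeSet.mp (hall (φ ⟨x, hx⟩))).fst_mem
      rwa [hp ⟨x, hx⟩] at hm
    · intro v w hvw
      obtain ⟨j, hj⟩ := hCadj v w hvw
      have hmem : s(v, w) ∈ (H i).edgeSet := by rw [hj]; exact hall j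
      exact SimpleGraph.Subgraph.mem_edgeSet.mp hmem
  -- an old edge on the cycle
  obtain ⟨e, heC, heH⟩ := hint
  obtain ⟨x, y, hxy, rfl⟩ : ∃ x y, C.Adj x y ∧ e = s(x, y) := by
    induction e with
    | h x y => exact ⟨x, y, SimpleGraph.Subgraph.mem_edgeSet.mp heC, rfl⟩
  obtain ⟨j₀, hj₀eq⟩ := hCadj x y hxy
  rw [hj₀eq] at heH
  have hj₀B : j₀ ∉ B := fun h => h heH
  have hj₀adj : (H i).Adj (ψ j₀) (ψ (j₀ + 1)) := SimpleGraph.Subgraph.mem_edgeSet.mp heH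
  have hj₀A : j₀ ∉ A := fun h => h hj₀adj.fst_mem
  have hj₁A : j₀ + 1 ∉ A := fun h => h hj₀adj.snd_mem
  -- A relates to B
  have hAB : ∀ j ∈ A, j ∈ B ∧ j - 1 ∈ B := by
    intro j hj
    constructor
    · intro hmem
      exact hj (SimpleGraph.Subgraph.mem_edgeSet.mp hmem).fst_mem
    · intro hmem
      have hm := (SimpleGraph.Subgraph.mem_edgeSet.mp hmem).snd_mem
      rw [sub_add_cancel] at hm
      exact hj hm
  obtain ⟨hcount1, hcount2⟩ := fin_count A B hAB j₀ hj₀B hj₀A hj₁A hBne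
  -- vertex set identification
  have hverts : (H (i + 1)).verts \ (H i).verts = ψ '' A := by
    ext x
    simp only [hsup, SimpleGraph.Subgraph.verts_sup, Set.mem_diff, Set.mem_union, Set.mem_image]
    constructor
    · rintro ⟨hx | hx, hnx⟩
      · exact absurd hx hnx
      · refine ⟨φ ⟨x, hx⟩, ?_, hp ⟨x, hx⟩⟩
        show ψ (φ ⟨x, hx⟩) ∉ (H i).verts
        rwa [hp ⟨x, hx⟩]
    · rintro ⟨j, hj, rfl⟩
      exact ⟨Or.inr (hψmem j), hj⟩
  -- edge map
  set eMap : Fin (k + 3) → Sym2 V := fun j => s(ψ j, ψ (j + 1)) with heMapdef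
  have heMapinj : Function.Injective eMap := by
    intro a b h
    simp only [heMapdef, Sym2.eq_iff] at h
    rcases h with ⟨h1, h2⟩ | ⟨h1, h2⟩
    · exact hψinj h1
    · exfalso
      have ha : a = b + 1 := hψinj h1
      have hb : b = a + 1 := (hψinj h2).symm
      have habs : a + 2 = a + 0 := by
        rw [add_zero]
        calc a + 2 = (a + 1) + 1 := by open Fin.CommRing in ring
          _ = b + 1 := by rw [← hb]
          _ = a := ha.symm
      have h2z : (2 : Fin (k + 3)) = 0 := add_left_cancel habs
      open Fin.CommRing in have h2z' : ((2 : ℕ) : Fin (k + 3)) = 0 := by push_cast; exact h2z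
      rw [Fin.natCast_eq_zero] at h2z'
      have hle := Nat.le_of_dvd (by norm_num) h2z'
      omega
  have hedges : eMap '' B ⊆ (H (i + 1)).edgeSet \ (H i).edgeSet := by
    rintro e ⟨j, hj, rfl⟩
    constructor
    · rw [hsup, SimpleGraph.Subgraph.edgeSet_sup]
      exact Or.inr (SimpleGraph.Subgraph.mem_edgeSet.mpr (hAdj' j))
    · exact hj
  constructor
  · calc ((H (i + 1)).verts \ (H i).verts).ncard + 1
        = A.ncard + 1 := by rw [hverts, Set.ncard_image_of_injective _ hψinj]
      _ ≤ B.ncard := hcount1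
      _ = (eMap '' B).ncard := (Set.ncard_image_of_injective _ heMapinj).symm
      _ ≤ ((H (i + 1)).edgeSet \ (H i).edgeSet).ncard :=
          Set.ncard_le_ncard hedges (Set.toFinite _)
  · have hv : ((H (i + 1)).verts \ (H i).verts).ncard = A.ncard := by
      rw [hverts, Set.ncard_image_of_injective _ hψinj]
    omega
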